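/- Let S > 0 and 0 < Z_SR ≤ Z_SD, Z_RD > 0, and let t1 ∈ (0,1], t2 = 1 − t1. Define α1 = (1/(Z_SR·S))·[ (1 + Z_SR·S) / (1 + Z_RD·S/(1 + Z_SD·S))^{t2/t1} − 1 ]. If 0 ≤ α1 ≤ 1, then t1·log(1 + Z_SD·α1·S) + t2·log(1 + (Z_SD + Z_RD)·S) ≤ log(1 + Z_SD·S). -/

import Mathlib

open Real

/-- For a three-node relay network with `0 < Z_SR ≤ Z_SD`,
`Z_RD > 0`, `S > 0`, slot lengths `t1 ∈ (0,1]`, `t2 = 1 − t1`, and the power split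
`α1 = (1/(Z_SR·S))·[(1 + Z_SR·S)/(1 + Z_RD·S/(1 + Z_SD·S))^(t2/t1) − 1]`,
if `0 ≤ α1 ≤ 1` then
`t1·log(1 + Z_SD·α1·S) + t2·log(1 + (Z_SD + Z_RD)·S) ≤ log(1 + Z_SD·S)`. -/
theorem rate_le_direct_of_strong_direct_link
    (S ZSD ZSR ZRD t1 t2 : ℝ) (hS : 0 < S) (hZSR : 0 < ZSR) (hZ : ZSR ≤ ZSD)
    (hZRD : 0 < ZRD) (ht1 : 0 < t1) (ht1' : t1 ≤ 1) (ht2 : t2 = 1 - t1)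
    (α1 : ℝ)
    (hα1 : α1 = (1 / (ZSR * S)) *
      ((1 + ZSR * S) / (1 + ZRD * S / (1 + ZSD * S)) ^ (t2 / t1) - 1))
    (hα1nonneg : 0 ≤ α1) (hα1le : α1 ≤ 1) :
    t1 * Real.log (1 + ZSD * α1 * S) + t2 * Real.log (1 + (ZSD + ZRD) * S)
      ≤ Real.log (1 + ZSD * S) := by
  have hZSD : 0 < ZSD := lt_of_lt_of_le hZSR hZ
  have hA : (0:ℝ) < 1 + ZSD * S := by nlinarith
  set B : ℝ := 1 + ZRD * S / (1 + ZSD * S) with hBdef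
  have hB1 : (1:ℝ) ≤ B := by
    have : 0 ≤ ZRD * S / (1 + ZSD * S) := by positivity
    simp [hBdef]; linarith
  have hB0 : (0:ℝ) < B := by linarith
  have ht2nn : 0 ≤ t2 := by linarith
  set x : ℝ := B ^ (t2 / t1) with hxdef
  have hx1 : (1:ℝ) ≤ x := Real.one_le_rpow hB1 (by positivity)
  have hx0 : (0:ℝ) < x := by linarith
  have heq : ZSR * S * α1 * x = (1 + ZSR * S) - x := by
    rw [hα1]
    field_simp
  have heq2 : ZSD * (ZSR * S * α1 * x) = ZSD * ((1 + ZSR * S) - x) := by rw [heq]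
  have hkey : x * (1 + ZSD * α1 * S) ≤ 1 + ZSD * S := by
    have hmul : ZSR * (x * (1 + ZSD * α1 * S)) ≤ ZSR * (1 + ZSD * S) := by
      nlinarith [mul_nonneg (sub_nonneg.2 hZ) (sub_nonneg.2 hx1)]
    exact le_of_mul_le_mul_left hmul hZSR
  have hpos1 : 0 < 1 + ZSD * α1 * S := by
    have : 0 ≤ ZSD * α1 * S := mul_nonneg (mul_nonneg hZSD.le hα1nonneg) hS.le
    linarith
  have hlog1 : Real.log (1 + ZSD * α1 * S) ≤ Real.log ((1 + ZSD * S) / x) := by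
    apply Real.log_le_log hpos1
    rw [le_div_iff₀ hx0]
    linarith [hkey]
  have hlogdiv : Real.log ((1 + ZSD * S) / x) =
      Real.log (1 + ZSD * S) - (t2 / t1) * Real.log B := by
    rw [Real.log_div (ne_of_gt hA) (ne_of_gt hx0), hxdef, Real.log_rpow hB0]
  have hAB : 1 + (ZSD + ZRD) * S = (1 + ZSD * S) * B := by
    rw [hBdef]
    field_simp
    ring
  have hlogAB : Real.log (1 + (ZSD + ZRD) * S) =
      Real.log (1 + ZSD * S) + Real.log B := by
    rw [hAB, Real.log_mul (ne_of_gt hA) (ne_of_gt hB0)]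
  have ht1t2 : t1 * (t2 / t1) = t2 := by field_simp
  have h1 : t1 * Real.log (1 + ZSD * α1 * S) ≤
      t1 * (Real.log (1 + ZSD * S) - (t2 / t1) * Real.log B) := by
    rw [← hlogdiv]
    exact mul_le_mul_of_nonneg_left (by linarith [hlog1]) ht1.le
  have hexp : t1 * (Real.log (1 + ZSD * S) - (t2 / t1) * Real.log B) =
      t1 * Real.log (1 + ZSD * S) - t2 * Real.log B := by
    rw [mul_sub, ← mul_assoc, ht1t2]
  rw [hlogAB]
  have hd : t2 * (Real.log (1 + ZSD * S) + Real.log B) =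
      t2 * Real.log (1 + ZSD * S) + t2 * Real.log B := by ring
  have hsum : t1 * Real.log (1 + ZSD * S) + t2 * Real.log (1 + ZSD * S) =
      Real.log (1 + ZSD * S) := by rw [ht2]; ring
  linarith [h1, hexp]
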